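/- For nonzero complex a, b, c with α, β, γ the squish-map connection matrices, the (1,1) entry of γ⁻¹β⁻¹α⁻¹γβα equals a²b²c² + a²b² + a²c² + a² + 1. -/

import Mathlib

open Matrix Complex

set_option maxHeartbeats 1000000 in
theorem squish_hexagon_entry (a b c : ℂ) (ha : a ≠ 0) (hb : b ≠ 0) (hc : c ≠ 0) :
    let α : Matrix (Fin 2) (Fin 2) ℂ := !![I * a, 0; 0, (I * a)⁻¹]
    let β : Matrix (Fin 2) (Fin 2) ℂ := !![I * b, -(I * b) - I * b⁻¹; 0, (I * b)⁻¹]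
    let γ : Matrix (Fin 2) (Fin 2) ℂ := !![(I * c)⁻¹, 0; -(I * c) - I * c⁻¹, I * c]
    (γ⁻¹ * β⁻¹ * α⁻¹ * γ * β * α) 0 0 =
      a ^ 2 * b ^ 2 * c ^ 2 + a ^ 2 * b ^ 2 + a ^ 2 * c ^ 2 + a ^ 2 + 1 := by
  intro α β γ
  have hia : I * a ≠ 0 := mul_ne_zero I_ne_zero ha
  have hib : I * b ≠ 0 := mul_ne_zero I_ne_zero hb
  have hic : I * c ≠ 0 := mul_ne_zero I_ne_zero hc
  simp only [α, β, γ, Matrix.inv_def, adjugate_fin_two_of, det_fin_two_of]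
  simp [Matrix.mul_apply, Fin.sum_univ_two]
  field_simp
  ring_nf
  rw [show (I:ℂ)^12 = 1 from by rw [show (12:ℕ)=2*6 from rfl, pow_mul, I_sq]; norm_num]
  ring
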